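/- Pointwise robust stabilization (scalar frequency-wise version of the stabilizing-controllers theorem): let g₁, g₂ be complex numbers and c a nonzero complex number. If κ(g₁, g₂) < κ(g₁, c⁻¹), then 1 − c·g₂ ≠ 0, and moreover the perturbed pointwise stability margin satisfies the degradation bound κ(g₂, c⁻¹) ≥ κ(g₁, c⁻¹) − κ(g₁, g₂). -/

import Mathlib

/-- The pointwise ν-gap (chordal distance) between two complex numbers. -/
noncomputable def kappa (a b : ℂ) : ℝ :=
  ‖a - b‖ /
    (Real.sqrt (1 + ‖a‖ ^ 2) * Real.sqrt (1 + ‖b‖ ^ 2))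

lemma abs_one_add_conj_mul_le (b c : ℂ) :
    ‖1 + (starRingEnd ℂ) b * c‖ ≤
      Real.sqrt (1 + ‖b‖ ^ 2) * Real.sqrt (1 + ‖c‖ ^ 2) := by
  have hb : (0:ℝ) ≤ 1 + ‖b‖ ^ 2 := by positivity
  have hc : (0:ℝ) ≤ 1 + ‖c‖ ^ 2 := by positivity
  rw [show Real.sqrt (1 + ‖b‖ ^ 2) * Real.sqrt (1 + ‖c‖ ^ 2)
      = Real.sqrt ((1 + ‖b‖ ^ 2) * (1 + ‖c‖ ^ 2)) from
      (Real.sqrt_mul hb _).symm]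
  rw [Complex.norm_def]
  apply Real.sqrt_le_sqrt
  rw [Complex.sq_norm, Complex.sq_norm]
  simp only [Complex.normSq_apply, Complex.add_re, Complex.add_im, Complex.one_re,
    Complex.one_im, Complex.mul_re, Complex.mul_im, Complex.conj_re, Complex.conj_im]
  nlinarith [sq_nonneg (b.re - c.re), sq_nonneg (b.im - c.im),
    sq_nonneg (b.re + c.re), sq_nonneg (b.im + c.im)]

lemma kappa_triangle (a b c : ℂ) : kappa a c ≤ kappa a b + kappa b c := by
  have hA : (0:ℝ) < Real.sqrt (1 + ‖a‖ ^ 2) := Real.sqrt_pos.mpr (by positivity)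
  have hB : (0:ℝ) < Real.sqrt (1 + ‖b‖ ^ 2) := Real.sqrt_pos.mpr (by positivity)
  have hC : (0:ℝ) < Real.sqrt (1 + ‖c‖ ^ 2) := Real.sqrt_pos.mpr (by positivity)
  set A := Real.sqrt (1 + ‖a‖ ^ 2)
  set B := Real.sqrt (1 + ‖b‖ ^ 2)
  set C := Real.sqrt (1 + ‖c‖ ^ 2)
  have hB2 : B ^ 2 = 1 + ‖b‖ ^ 2 := Real.sq_sqrt (by positivity)
  -- key identity
  have hid : (a - c) * (1 + (starRingEnd ℂ) b * b)
      = (a - b) * (1 + (starRingEnd ℂ) b * c) + (b - c) * (1 + (starRingEnd ℂ) b * a) := by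
    ring
  have hnorm : ‖a - c‖ * B ^ 2
      ≤ ‖a - b‖ * (B * C) + ‖b - c‖ * (B * A) := by
    have h1 : ‖(a - c) * (1 + (starRingEnd ℂ) b * b)‖
        = ‖a - c‖ * B ^ 2 := by
      rw [norm_mul, hB2]
      congr 1
      have : (1 : ℂ) + (starRingEnd ℂ) b * b = ((1 + ‖b‖ ^ 2 : ℝ) : ℂ) := by
        simp [Complex.ext_iff, Complex.normSq_apply, Complex.sq_norm]
        ring_nf
      rw [this, Complex.norm_real, Real.norm_eq_abs, abs_of_nonneg (by positivity)]
    calc ‖a - c‖ * B ^ 2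
        = ‖(a - b) * (1 + (starRingEnd ℂ) b * c)
            + (b - c) * (1 + (starRingEnd ℂ) b * a)‖ := by rw [← h1, hid]
      _ ≤ ‖(a - b) * (1 + (starRingEnd ℂ) b * c)‖
            + ‖(b - c) * (1 + (starRingEnd ℂ) b * a)‖ := norm_add_le _ _
      _ ≤ ‖a - b‖ * (B * C) + ‖b - c‖ * (B * A) := by
          rw [norm_mul, norm_mul]
          gcongr
          · exact abs_one_add_conj_mul_le b c
          · exact abs_one_add_conj_mul_le b a
  have key : ‖a - c‖ * B ≤ ‖a - b‖ * C + ‖b - c‖ * A := by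
    have := hnorm
    nlinarith [hB, norm_nonneg (a-c)]
  unfold kappa
  rw [div_add_div _ _ (by positivity) (by positivity),
    div_le_div_iff₀ (by positivity) (by positivity)]
  have h2 := mul_le_mul_of_nonneg_left key (le_of_lt (mul_pos hA hC))
  have h3 := mul_le_mul_of_nonneg_left h2 hB.le
  nlinarith [h3]

theorem pointwise_robust_stabilization (g₁ g₂ c : ℂ) (hc : c ≠ 0)
    (h : kappa g₁ g₂ < kappa g₁ c⁻¹) :
    1 - c * g₂ ≠ 0 ∧ kappa g₂ c⁻¹ ≥ kappa g₁ c⁻¹ - kappa g₁ g₂ := by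
  have tri := kappa_triangle g₁ g₂ c⁻¹
  constructor
  · intro hz
    have hg : g₂ = c⁻¹ := by
      field_simp at hz ⊢
      linear_combination -hz
    have hzero : kappa g₂ c⁻¹ = 0 := by
      rw [hg]; unfold kappa; simp
    linarith
  · linarith
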